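/- For all x, y ∈ ℝ, the expectation over ω drawn from the standard normal distribution N(0,1) and φ drawn independently from the uniform distribution on [0, 2π] of the product of Random Fourier Features satisfies E_{ω,φ}[ (√2·cos(ω x + φ)) · (√2·cos(ω y + φ)) ] = exp(−(x − y)²⁄2). That is, the Random Fourier Features with Gaussian frequencies and uniform phases reproduce the Gaussian kernel in expectation. -/

import Mathlib

open MeasureTheory ProbabilityTheory Real

open Complex ENNReal NNReal in
lemma gauss_cos (t : ℝ) :
    ∫ ω, Real.cos (ω * t) ∂(gaussianReal 0 1) = Real.exp (-t ^ 2 / 2) := by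
  rw [gaussianReal_of_var_ne_zero 0 one_ne_zero]
  have hmeas : Measurable fun ω : ℝ => (gaussianPDFReal 0 1 ω).toNNReal :=
    (measurable_gaussianPDFReal 0 1).real_toNNReal
  have hwd : (gaussianPDF 0 1) = fun ω => ((gaussianPDFReal 0 1 ω).toNNReal : ℝ≥0∞) := rfl
  rw [hwd, integral_withDensity_eq_integral_smul hmeas]
  have hpdf : ∀ ω : ℝ, ((gaussianPDFReal 0 1 ω).toNNReal : ℝ≥0) • Real.cos (ω * t)
      = (Real.sqrt (2 * π))⁻¹ * (Real.exp (-ω ^ 2 / 2) * Real.cos (ω * t)) := by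
    intro ω
    rw [NNReal.smul_def, Real.coe_toNNReal _ (gaussianPDFReal_nonneg 0 1 ω)]
    simp only [gaussianPDFReal, NNReal.coe_one, mul_one, sub_zero]
    rw [smul_eq_mul]; ring
  simp_rw [hpdf]
  rw [integral_const_mul]
  have hb : (0:ℝ) < ((1/2 : ℂ)).re := by norm_num
  have hK := fourierIntegral_gaussian hb (t : ℂ)
  have hint : Integrable fun ω : ℝ => Complex.exp (Complex.I * t * ω) *
      Complex.exp (-(1/2 : ℂ) * ω ^ 2) := by
    refine (integrable_cexp_quadratic (b := (1/2 : ℂ)) hb (Complex.I * t) 0).congr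
      (Filter.EventuallyEq.of_eq (funext fun ω => ?_))
    rw [← Complex.exp_add]
    ring_nf
  have hre : ∫ ω : ℝ, Real.exp (-ω ^ 2 / 2) * Real.cos (ω * t)
      = (∫ ω : ℝ, Complex.exp (Complex.I * t * ω) * Complex.exp (-(1/2 : ℂ) * ω ^ 2)).re := by
    have hre' := integral_re hint
    simp only [RCLike.re_to_complex] at hre'
    rw [← hre']
    congr 1
    ext ω
    have h1 : Complex.I * t * ω = ((ω * t : ℝ) : ℂ) * Complex.I := by push_cast; ring
    have h2 : (-(1/2 : ℂ) * ω ^ 2) = ((-ω ^ 2 / 2 : ℝ) : ℂ) := by push_cast; ring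
    rw [h1, h2, ← Complex.ofReal_exp, Complex.mul_re, Complex.exp_ofReal_mul_I_re,
      Complex.exp_ofReal_mul_I_im, Complex.ofReal_re, Complex.ofReal_im, mul_zero, sub_zero,
      mul_comm]
  rw [hre, hK]
  have h2pi : (π / (1/2 : ℂ)) = ((2 * π : ℝ) : ℂ) := by push_cast; ring
  have hc : ((π / (1/2 : ℂ)) ^ (1/2 : ℂ)) = ((Real.sqrt (2 * π) : ℝ) : ℂ) := by
    rw [h2pi, show ((1/2 : ℂ)) = ((1/2 : ℝ) : ℂ) by push_cast; ring,
      ← Complex.ofReal_cpow (by positivity), Real.sqrt_eq_rpow]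
  have hd : Complex.exp (-(t:ℂ) ^ 2 / (4 * (1/2 : ℂ))) = ((Real.exp (-t ^ 2 / 2) : ℝ) : ℂ) := by
    rw [Complex.ofReal_exp]
    push_cast
    ring_nf
  rw [hc, hd, ← Complex.ofReal_mul, Complex.ofReal_re]
  rw [← mul_assoc, inv_mul_cancel₀ (by positivity), one_mul]


/-- For all `x, y ∈ ℝ`, the expectation over `ω ~ N(0,1)` and `φ ~ Uniform[0, 2π]`
(independently) of the product of Random Fourier Features satisfies
`E[(√2·cos(ω x + φ)) · (√2·cos(ω y + φ))] = exp(−(x−y)²/2)`: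
Random Fourier Features with Gaussian frequencies and uniform phases reproduce the
Gaussian kernel in expectation. -/
theorem rff_expectation_eq_gaussian_kernel (x y : ℝ) :
    ∫ p : ℝ × ℝ,
        (Real.sqrt 2 * Real.cos (p.1 * x + p.2)) * (Real.sqrt 2 * Real.cos (p.1 * y + p.2))
      ∂((gaussianReal 0 1).prod
          ((ENNReal.ofReal (2 * Real.pi))⁻¹ • volume.restrict (Set.Icc 0 (2 * Real.pi))))
      = Real.exp (-(x - y) ^ 2 / 2) := by
  set ν : Measure ℝ := (ENNReal.ofReal (2 * Real.pi))⁻¹ • volume.restrict (Set.Icc 0 (2 * Real.pi))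
    with hν
  have h2pi : (0:ℝ) < 2 * π := by positivity
  haveI : IsProbabilityMeasure ν := by
    constructor
    rw [hν, Measure.smul_apply, Measure.restrict_apply MeasurableSet.univ, Set.univ_inter,
      Real.volume_Icc, sub_zero, smul_eq_mul,
      ENNReal.inv_mul_cancel (by simp [h2pi, Real.pi_pos]) ENNReal.ofReal_ne_top]
  have key : ∀ ω φ : ℝ,
      (Real.sqrt 2 * Real.cos (ω * x + φ)) * (Real.sqrt 2 * Real.cos (ω * y + φ))
      = Real.cos (ω * (x - y)) + Real.cos (2 * φ + ω * (x + y)) := by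
    intro ω φ
    have hs : Real.sqrt 2 * Real.sqrt 2 = 2 := Real.mul_self_sqrt (by norm_num)
    have h1 : Real.cos ((ω * x + φ) - (ω * y + φ)) + Real.cos ((ω * x + φ) + (ω * y + φ))
        = 2 * (Real.cos (ω * x + φ) * Real.cos (ω * y + φ)) := by
      simp only [Real.cos_sub, Real.cos_add, Real.sin_add]; ring
    have e1 : (ω * x + φ) - (ω * y + φ) = ω * (x - y) := by ring
    have e2 : (ω * x + φ) + (ω * y + φ) = 2 * φ + ω * (x + y) := by ring
    rw [e1, e2] at h1
    calc (Real.sqrt 2 * Real.cos (ω * x + φ)) * (Real.sqrt 2 * Real.cos (ω * y + φ))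
        = 2 * (Real.cos (ω * x + φ) * Real.cos (ω * y + φ)) := by
          rw [show (Real.sqrt 2 * Real.cos (ω * x + φ)) * (Real.sqrt 2 * Real.cos (ω * y + φ))
            = (Real.sqrt 2 * Real.sqrt 2) * (Real.cos (ω * x + φ) * Real.cos (ω * y + φ)) by ring,
            hs]
      _ = _ := h1.symm
  have hcont : Continuous fun p : ℝ × ℝ =>
      (Real.sqrt 2 * Real.cos (p.1 * x + p.2)) * (Real.sqrt 2 * Real.cos (p.1 * y + p.2)) := by
    fun_prop
  have hint : Integrable (fun p : ℝ × ℝ =>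
      (Real.sqrt 2 * Real.cos (p.1 * x + p.2)) * (Real.sqrt 2 * Real.cos (p.1 * y + p.2)))
      ((gaussianReal 0 1).prod ν) := by
    refine (integrable_const (2:ℝ)).mono' hcont.aestronglyMeasurable ?_
    filter_upwards with p
    rw [Real.norm_eq_abs, abs_mul, abs_mul, abs_mul]
    have : |Real.sqrt 2| * |Real.cos (p.1 * x + p.2)| * (|Real.sqrt 2| * |Real.cos (p.1 * y + p.2)|)
        ≤ |Real.sqrt 2| * 1 * (|Real.sqrt 2| * 1) := by
      gcongr <;> exact Real.abs_cos_le_one _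
    refine this.trans ?_
    rw [_root_.abs_of_nonneg (Real.sqrt_nonneg 2), mul_one, Real.mul_self_sqrt (by norm_num)]
  rw [MeasureTheory.integral_prod _ hint]
  have inner_eq : ∀ ω : ℝ,
      (∫ φ, (Real.sqrt 2 * Real.cos (ω * x + φ)) * (Real.sqrt 2 * Real.cos (ω * y + φ)) ∂ν)
      = Real.cos (ω * (x - y)) := by
    intro ω
    simp_rw [key ω]
    have hg : Integrable (fun φ => Real.cos (2 * φ + ω * (x + y))) ν := by
      refine (integrable_const (1:ℝ)).mono'
        (by fun_prop : Continuous fun φ : ℝ => Real.cos (2 * φ + ω * (x + y))).aestronglyMeasurable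
        ?_
      filter_upwards with φ
      rw [Real.norm_eq_abs]
      exact Real.abs_cos_le_one _
    rw [integral_add (integrable_const _) hg, integral_const, probReal_univ,
      one_smul]
    have hzero : (∫ φ, Real.cos (2 * φ + ω * (x + y)) ∂ν) = 0 := by
      rw [hν, integral_smul_measure]
      have h0 : (∫ φ in Set.Icc 0 (2*π), Real.cos (2 * φ + ω * (x + y))) = 0 := by
        rw [MeasureTheory.integral_Icc_eq_integral_Ioc, ← intervalIntegral.integral_of_le h2pi.le,
          intervalIntegral.integral_comp_mul_add Real.cos two_ne_zero (ω * (x + y)),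
          _root_.integral_cos,
          show 2*(2*π) + ω*(x+y) = (2*0 + ω*(x+y)) + 2*π + 2*π by ring,
          Real.sin_add_two_pi, Real.sin_add_two_pi, sub_self, smul_zero]
      rw [h0, smul_zero]
    rw [hzero, add_zero]
  simp_rw [inner_eq]
  exact gauss_cos (x - y)
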